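/- Derivative of an edge length with respect to the opposite dihedral angle, spherical case. Let u₁,…,u₄ : J → ℝ⁴ be a C¹ family (J an open interval) of unit vectors which are linearly independent for every t ∈ J, such that the five geodesic distances l_{ab} = arccos⟨u_a,u_b⟩ with (a,b) ≠ (1,4) are constant in t, while l₁₄(t) = arccos⟨u₁(t),u₄(t)⟩ varies. Let θ₂₃(t) be the interior dihedral angle along the edge (2,3) and G(t) the Gram determinant det(cos l_{ab}). Then for all t ∈ J: |θ₂₃′(t)| · √(G(t)) = sin(l₁₄(t)) · sin(l₂₃) · |l₁₄′(t)|. -/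

import Mathlib

open Real
open scoped RealInnerProductSpace
open Filter Topology

noncomputable abbrev E4 := EuclideanSpace ℝ (Fin 4)

/-- The component of `x` orthogonal to the subspace `K`. -/
noncomputable def perpComponent (K : Submodule ℝ E4) (x : E4) : E4 :=
  x - (K.orthogonalProjectionOnto x : E4)

/-- The interior dihedral angle of the spherical tetrahedron spanned by the unit
vectors `u 0, …, u 3` along the edge `(a, b)`: the angle between the orthogonal
projections of `u c` and `u d` onto the orthogonal complement of `span {u a, u b}`. -/
noncomputable def dihedralAngle (u : Fin 4 → E4) (a b c d : Fin 4) : ℝ :=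
  InnerProductGeometry.angle
    (perpComponent (Submodule.span ℝ {u a, u b}) (u c))
    (perpComponent (Submodule.span ℝ {u a, u b}) (u d))

noncomputable def DD (v : Fin 4 → E4) : ℝ := 1 - ⟪v 1, v 2⟫ ^ 2
noncomputable def PP (v : Fin 4 → E4) : ℝ :=
  DD v - ⟪v 0, v 1⟫ ^ 2 - ⟪v 0, v 2⟫ ^ 2 + 2 * ⟪v 1, v 2⟫ * ⟪v 0, v 1⟫ * ⟪v 0, v 2⟫
noncomputable def QQ (v : Fin 4 → E4) : ℝ :=
  DD v - ⟪v 1, v 3⟫ ^ 2 - ⟪v 2, v 3⟫ ^ 2 + 2 * ⟪v 1, v 2⟫ * ⟪v 1, v 3⟫ * ⟪v 2, v 3⟫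
noncomputable def NN (v : Fin 4 → E4) : ℝ :=
  DD v * ⟪v 0, v 3⟫ - ⟪v 0, v 1⟫ * ⟪v 1, v 3⟫ - ⟪v 0, v 2⟫ * ⟪v 2, v 3⟫
    + ⟪v 1, v 2⟫ * (⟪v 0, v 2⟫ * ⟪v 1, v 3⟫ + ⟪v 0, v 1⟫ * ⟪v 2, v 3⟫)

lemma li_comb {v : Fin 4 → E4} (hli : LinearIndependent ℝ v) (c : Fin 4 → ℝ)
    (h : c 0 • v 0 + c 1 • v 1 + c 2 • v 2 + c 3 • v 3 = 0) : ∀ i, c i = 0 :=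
  Fintype.linearIndependent_iff.mp hli c (by rw [Fin.sum_univ_four]; exact h)

lemma inner_sq_lt_one {x y : E4} (hx : ‖x‖ = 1) (hy : ‖y‖ = 1) (h1 : x ≠ y)
    (h2 : x ≠ -y) : ⟪x, y⟫ ^ 2 < 1 := by
  have a1 : ⟪x, y⟫ < 1 := (inner_lt_one_iff_real_of_norm_eq_one hx hy).mpr h1
  have a2 : ⟪x, -y⟫ < 1 :=
    (inner_lt_one_iff_real_of_norm_eq_one hx (by simpa using hy)).mpr h2
  rw [inner_neg_right] at a2
  nlinarith

lemma orthProj_pair (v1 v2 : E4) (h1 : ‖v1‖ = 1) (h2 : ‖v2‖ = 1)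
    (hΔ : 1 - ⟪v1, v2⟫ ^ 2 ≠ 0) (x : E4) :
    ((Submodule.span ℝ {v1, v2}).orthogonalProjectionOnto x : E4) =
      ((⟪v1, x⟫ - ⟪v1, v2⟫ * ⟪v2, x⟫) / (1 - ⟪v1, v2⟫ ^ 2)) • v1 +
      ((⟪v2, x⟫ - ⟪v1, v2⟫ * ⟪v1, x⟫) / (1 - ⟪v1, v2⟫ ^ 2)) • v2 := by
  have e1 : ⟪v1, v1⟫ = 1 := by rw [real_inner_self_eq_norm_sq, h1]; norm_num
  have e2 : ⟪v2, v2⟫ = 1 := by rw [real_inner_self_eq_norm_sq, h2]; norm_num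
  have ec : ⟪v2, v1⟫ = ⟪v1, v2⟫ := real_inner_comm _ _
  apply Submodule.eq_starProjection_of_mem_of_inner_eq_zero
  · exact Submodule.mem_span_pair.mpr ⟨_, _, rfl⟩
  · intro w hw
    obtain ⟨a, b, rfl⟩ := Submodule.mem_span_pair.mp hw
    simp only [inner_sub_left, inner_add_left, inner_add_right, real_inner_smul_left,
      real_inner_smul_right, e1, e2]
    rw [real_inner_comm x v1, real_inner_comm x v2, ec]
    generalize ⟪v1, x⟫ = p
    generalize ⟪v2, x⟫ = q
    generalize hg : ⟪v1, v2⟫ = g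
    rw [hg] at hΔ
    field_simp
    ring

lemma perp_comb_ne {v : Fin 4 → E4} (hli : LinearIndependent ℝ v)
    (a0 b0 a3 b3 s r : ℝ) (hs : s ≠ 0) :
    s • (v 0 - (a0 • v 1 + b0 • v 2)) ≠ r • (v 3 - (a3 • v 1 + b3 • v 2)) := by
  intro h
  have h0 := li_comb hli ![s, -(s * a0) + r * a3, -(s * b0) + r * b3, -r] (by
    show s • v 0 + (-(s * a0) + r * a3) • v 1 + (-(s * b0) + r * b3) • v 2 + (-r) • v 3 = 0
    linear_combination (norm := module) h) 0
  exact hs h0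

theorem det_fin_four' (M : Matrix (Fin 4) (Fin 4) ℝ) :
    M.det =
      M 0 0 * M 1 1 * M 2 2 * M 3 3 - M 0 0 * M 1 1 * M 2 3 * M 3 2 -
      M 0 0 * M 1 2 * M 2 1 * M 3 3 + M 0 0 * M 1 2 * M 2 3 * M 3 1 +
      M 0 0 * M 1 3 * M 2 1 * M 3 2 - M 0 0 * M 1 3 * M 2 2 * M 3 1 -
      M 0 1 * M 1 0 * M 2 2 * M 3 3 + M 0 1 * M 1 0 * M 2 3 * M 3 2 +
      M 0 1 * M 1 2 * M 2 0 * M 3 3 - M 0 1 * M 1 2 * M 2 3 * M 3 0 -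
      M 0 1 * M 1 3 * M 2 0 * M 3 2 + M 0 1 * M 1 3 * M 2 2 * M 3 0 +
      M 0 2 * M 1 0 * M 2 1 * M 3 3 - M 0 2 * M 1 0 * M 2 3 * M 3 1 -
      M 0 2 * M 1 1 * M 2 0 * M 3 3 + M 0 2 * M 1 1 * M 2 3 * M 3 0 +
      M 0 2 * M 1 3 * M 2 0 * M 3 1 - M 0 2 * M 1 3 * M 2 1 * M 3 0 -
      M 0 3 * M 1 0 * M 2 1 * M 3 2 + M 0 3 * M 1 0 * M 2 2 * M 3 1 +
      M 0 3 * M 1 1 * M 2 0 * M 3 2 - M 0 3 * M 1 1 * M 2 2 * M 3 0 -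
      M 0 3 * M 1 2 * M 2 0 * M 3 1 + M 0 3 * M 1 2 * M 2 1 * M 3 0 := by
  have h3 : (2 : Fin 3).succ = 3 := rfl
  have h4 : Fin.castSucc (2 : Fin 3) = 2 := rfl
  have h5 : Fin.castSucc (1 : Fin 3) = 1 := rfl
  have h6 : Fin.castSucc (0 : Fin 3) = 0 := rfl
  simp [Matrix.det_succ_row_zero, Fin.sum_univ_succ, Matrix.det_fin_three, Fin.succAbove,
    Fin.succ_zero_eq_one, Fin.succ_one_eq_two, h3, h4, h5, h6]
  ring

set_option maxHeartbeats 1000000 in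
lemma snapshot (v : Fin 4 → E4) (hu : ∀ a, ‖v a‖ = 1) (hli : LinearIndependent ℝ v) :
    0 < DD v ∧ 0 < PP v ∧ 0 < QQ v ∧ NN v ^ 2 < PP v * QQ v ∧
    dihedralAngle v 1 2 0 3 = Real.arccos (NN v / Real.sqrt (PP v * QQ v)) ∧
    DD v * Matrix.det (Matrix.of fun a b : Fin 4 => ⟪v a, v b⟫) = PP v * QQ v - NN v ^ 2 := by
  -- self-inner and comm facts
  have eself : ∀ a, ⟪v a, v a⟫ = 1 := fun a => by
    rw [real_inner_self_eq_norm_sq, hu a]; norm_num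
  have hne12 : v 1 ≠ v 2 := by
    intro h
    have := li_comb hli ![0, 1, -1, 0] (by
      show (0:ℝ) • v 0 + (1:ℝ) • v 1 + (-1:ℝ) • v 2 + (0:ℝ) • v 3 = 0
      linear_combination (norm := module) h) 1
    norm_num at this
  have hne12' : v 1 ≠ -v 2 := by
    intro h
    have := li_comb hli ![0, 1, 1, 0] (by
      show (0:ℝ) • v 0 + (1:ℝ) • v 1 + (1:ℝ) • v 2 + (0:ℝ) • v 3 = 0
      linear_combination (norm := module) h) 1
    norm_num at this
  have hΔpos : 0 < DD v := by
    have := inner_sq_lt_one (hu 1) (hu 2) hne12 hne12'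
    unfold DD; linarith
  have hΔne : 1 - ⟪v 1, v 2⟫ ^ 2 ≠ 0 := by unfold DD at hΔpos; linarith
  set K := Submodule.span ℝ {v 1, v 2} with hK
  have hP0 : perpComponent K (v 0) =
      v 0 - (((⟪v 0, v 1⟫ - ⟪v 1, v 2⟫ * ⟪v 0, v 2⟫) / (1 - ⟪v 1, v 2⟫ ^ 2)) • v 1 +
             ((⟪v 0, v 2⟫ - ⟪v 1, v 2⟫ * ⟪v 0, v 1⟫) / (1 - ⟪v 1, v 2⟫ ^ 2)) • v 2) := by
    rw [perpComponent, hK, orthProj_pair (v 1) (v 2) (hu 1) (hu 2) hΔne (v 0),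
      real_inner_comm (v 1) (v 0), real_inner_comm (v 2) (v 0)]
  have hP3 : perpComponent K (v 3) =
      v 3 - (((⟪v 1, v 3⟫ - ⟪v 1, v 2⟫ * ⟪v 2, v 3⟫) / (1 - ⟪v 1, v 2⟫ ^ 2)) • v 1 +
             ((⟪v 2, v 3⟫ - ⟪v 1, v 2⟫ * ⟪v 1, v 3⟫) / (1 - ⟪v 1, v 2⟫ ^ 2)) • v 2) := by
    rw [perpComponent, hK, orthProj_pair (v 1) (v 2) (hu 1) (hu 2) hΔne (v 3)]
  have c21 : ⟪v 2, v 1⟫ = ⟪v 1, v 2⟫ := real_inner_comm _ _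
  have c10 : ⟪v 1, v 0⟫ = ⟪v 0, v 1⟫ := real_inner_comm _ _
  have c20 : ⟪v 2, v 0⟫ = ⟪v 0, v 2⟫ := real_inner_comm _ _
  have c30 : ⟪v 3, v 0⟫ = ⟪v 0, v 3⟫ := real_inner_comm _ _
  have c31 : ⟪v 3, v 1⟫ = ⟪v 1, v 3⟫ := real_inner_comm _ _
  have c32 : ⟪v 3, v 2⟫ = ⟪v 2, v 3⟫ := real_inner_comm _ _
  have hI03 : ⟪perpComponent K (v 0), perpComponent K (v 3)⟫ = NN v / DD v := by
    rw [hP0, hP3]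
    simp only [inner_sub_left, inner_sub_right, inner_add_left, inner_add_right,
      real_inner_smul_left, real_inner_smul_right, eself, c21, c10, c20, c30, c31, c32,
      NN, DD]
    generalize ⟪v 0, v 1⟫ = g01
    generalize ⟪v 0, v 2⟫ = g02
    generalize ⟪v 0, v 3⟫ = g03
    generalize ⟪v 1, v 3⟫ = g13
    generalize ⟪v 2, v 3⟫ = g23
    generalize hg : ⟪v 1, v 2⟫ = g12
    rw [hg] at hΔne
    field_simp
    ring
  have hI00 : ⟪perpComponent K (v 0), perpComponent K (v 0)⟫ = PP v / DD v := by
    rw [hP0]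
    simp only [inner_sub_left, inner_sub_right, inner_add_left, inner_add_right,
      real_inner_smul_left, real_inner_smul_right, eself, c21, c10, c20, c30, c31, c32,
      PP, DD]
    generalize ⟪v 0, v 1⟫ = g01
    generalize ⟪v 0, v 2⟫ = g02
    generalize hg : ⟪v 1, v 2⟫ = g12
    rw [hg] at hΔne
    field_simp
    ring
  have hI33 : ⟪perpComponent K (v 3), perpComponent K (v 3)⟫ = QQ v / DD v := by
    rw [hP3]
    simp only [inner_sub_left, inner_sub_right, inner_add_left, inner_add_right,
      real_inner_smul_left, real_inner_smul_right, eself, c21, c10, c20, c30, c31, c32,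
      QQ, DD]
    generalize ⟪v 1, v 3⟫ = g13
    generalize ⟪v 2, v 3⟫ = g23
    generalize hg : ⟪v 1, v 2⟫ = g12
    rw [hg] at hΔne
    field_simp
    ring
  have hN0 : ‖perpComponent K (v 0)‖ ^ 2 = PP v / DD v := by
    rw [← real_inner_self_eq_norm_sq]; exact hI00
  have hN3 : ‖perpComponent K (v 3)‖ ^ 2 = QQ v / DD v := by
    rw [← real_inner_self_eq_norm_sq]; exact hI33
  have hP0ne : perpComponent K (v 0) ≠ 0 := by
    rw [hP0]
    intro h
    have h0 := li_comb hli ![1, -((⟪v 0, v 1⟫ - ⟪v 1, v 2⟫ * ⟪v 0, v 2⟫) / (1 - ⟪v 1, v 2⟫ ^ 2)),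
      -((⟪v 0, v 2⟫ - ⟪v 1, v 2⟫ * ⟪v 0, v 1⟫) / (1 - ⟪v 1, v 2⟫ ^ 2)), 0] (by
      show (1:ℝ) • v 0 + (-((⟪v 0, v 1⟫ - ⟪v 1, v 2⟫ * ⟪v 0, v 2⟫) / (1 - ⟪v 1, v 2⟫ ^ 2))) • v 1 +
        (-((⟪v 0, v 2⟫ - ⟪v 1, v 2⟫ * ⟪v 0, v 1⟫) / (1 - ⟪v 1, v 2⟫ ^ 2))) • v 2 + (0:ℝ) • v 3 = 0
      linear_combination (norm := module) h) 0
    norm_num at h0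
  have hP3ne : perpComponent K (v 3) ≠ 0 := by
    rw [hP3]
    intro h
    have h0 := li_comb hli ![0, -((⟪v 1, v 3⟫ - ⟪v 1, v 2⟫ * ⟪v 2, v 3⟫) / (1 - ⟪v 1, v 2⟫ ^ 2)),
      -((⟪v 2, v 3⟫ - ⟪v 1, v 2⟫ * ⟪v 1, v 3⟫) / (1 - ⟪v 1, v 2⟫ ^ 2)), 1] (by
      show (0:ℝ) • v 0 + (-((⟪v 1, v 3⟫ - ⟪v 1, v 2⟫ * ⟪v 2, v 3⟫) / (1 - ⟪v 1, v 2⟫ ^ 2))) • v 1 +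
        (-((⟪v 2, v 3⟫ - ⟪v 1, v 2⟫ * ⟪v 1, v 3⟫) / (1 - ⟪v 1, v 2⟫ ^ 2))) • v 2 + (1:ℝ) • v 3 = 0
      linear_combination (norm := module) h) 3
    simp at h0
  have hPpos : 0 < PP v := by
    have h1 : 0 < ‖perpComponent K (v 0)‖ ^ 2 := pow_pos (norm_pos_iff.mpr hP0ne) 2
    rw [hN0] at h1
    have := mul_pos h1 hΔpos
    rwa [div_mul_cancel₀] at this
    exact ne_of_gt hΔpos
  have hQpos : 0 < QQ v := by
    have h1 : 0 < ‖perpComponent K (v 3)‖ ^ 2 := pow_pos (norm_pos_iff.mpr hP3ne) 2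
    rw [hN3] at h1
    have := mul_pos h1 hΔpos
    rwa [div_mul_cancel₀] at this
    exact ne_of_gt hΔpos
  have hcs1 : ⟪perpComponent K (v 0), perpComponent K (v 3)⟫ <
      ‖perpComponent K (v 0)‖ * ‖perpComponent K (v 3)‖ := by
    apply inner_lt_norm_mul_iff_real.mpr
    rw [hP0, hP3]
    exact perp_comb_ne hli _ _ _ _ _ _ (by rw [← hP3]; exact norm_ne_zero_iff.mpr hP3ne)
  have hcs2 : -⟪perpComponent K (v 0), perpComponent K (v 3)⟫ <
      ‖perpComponent K (v 0)‖ * ‖perpComponent K (v 3)‖ := by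
    have h5 := inner_lt_norm_mul_iff_real (x := perpComponent K (v 0))
      (y := -perpComponent K (v 3))
    rw [inner_neg_right, norm_neg] at h5
    apply h5.mpr
    rw [smul_neg, ← neg_smul, hP0, hP3]
    exact perp_comb_ne hli _ _ _ _ _ _ (by rw [← hP3]; exact norm_ne_zero_iff.mpr hP3ne)
  have hNlt : NN v ^ 2 < PP v * QQ v := by
    have h2 : ⟪perpComponent K (v 0), perpComponent K (v 3)⟫ ^ 2 <
        (‖perpComponent K (v 0)‖ * ‖perpComponent K (v 3)‖) ^ 2 := by nlinarith [hcs1, hcs2]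
    rw [hI03, mul_pow, hN0, hN3] at h2
    rw [div_pow, div_mul_div_comm, ← pow_two] at h2
    exact (div_lt_div_iff_of_pos_right (by positivity)).mp h2
  have hPQpos : 0 < PP v * QQ v := mul_pos hPpos hQpos
  have hang : dihedralAngle v 1 2 0 3 = Real.arccos (NN v / Real.sqrt (PP v * QQ v)) := by
    unfold dihedralAngle InnerProductGeometry.angle
    rw [← hK]
    congr 1
    have n0 : ‖perpComponent K (v 0)‖ = Real.sqrt (PP v / DD v) := by
      rw [← hN0]; exact (Real.sqrt_sq (norm_nonneg _)).symm
    have n3 : ‖perpComponent K (v 3)‖ = Real.sqrt (QQ v / DD v) := by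
      rw [← hN3]; exact (Real.sqrt_sq (norm_nonneg _)).symm
    rw [hI03, n0, n3, ← Real.sqrt_mul (by positivity)]
    have e3 : PP v / DD v * (QQ v / DD v) = (PP v * QQ v) / DD v ^ 2 := by
      field_simp
    rw [e3, Real.sqrt_div hPQpos.le, Real.sqrt_sq hΔpos.le]
    have hs : Real.sqrt (PP v * QQ v) ≠ 0 := (Real.sqrt_pos.mpr hPQpos).ne'
    field_simp
  have hdet : DD v * Matrix.det (Matrix.of fun a b : Fin 4 => ⟪v a, v b⟫) =
      PP v * QQ v - NN v ^ 2 := by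
    rw [det_fin_four']
    simp only [Matrix.of_apply, eself, c21, c10, c20, c30, c31, c32, DD, PP, QQ, NN]
    ring
  exact ⟨hΔpos, hPpos, hQpos, hNlt, hang, hdet⟩

open Real Filter Topology
lemma final_alg (Δ P Q N xt x' G : ℝ) (hΔ : 0 < Δ) (hP : 0 < P) (hQ : 0 < Q)
    (hN : N ^ 2 < P * Q) (hG : Δ * G = P * Q - N ^ 2) (hx : xt ^ 2 < 1) :
    |(-(1 / √(1 - (N / √(P * Q)) ^ 2))) * (Δ * x' / √(P * Q))| * √G =
    √(1 - xt ^ 2) * √Δ * |(-(1 / √(1 - xt ^ 2))) * x'| := by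
  have hA : 0 < P * Q := mul_pos hP hQ
  have hB : 0 < P * Q - N ^ 2 := by linarith
  have sA : 0 < √(P * Q) := Real.sqrt_pos.mpr hA
  have sB : 0 < √(P * Q - N ^ 2) := Real.sqrt_pos.mpr hB
  have sΔ : 0 < √Δ := Real.sqrt_pos.mpr hΔ
  have hxx : 0 < 1 - xt ^ 2 := by linarith
  have sx : 0 < √(1 - xt ^ 2) := Real.sqrt_pos.mpr hxx
  have hG' : G = (P * Q - N ^ 2) / Δ := by
    rw [eq_div_iff hΔ.ne']; linarith [hG]
  have h1 : 1 - (N / √(P * Q)) ^ 2 = (P * Q - N ^ 2) / (P * Q) := by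
    rw [div_pow, Real.sq_sqrt hA.le]; field_simp
  have h2 : √(1 - (N / √(P * Q)) ^ 2) = √(P * Q - N ^ 2) / √(P * Q) := by
    rw [h1, Real.sqrt_div hB.le]
  have h3 : √G = √(P * Q - N ^ 2) / √Δ := by rw [hG', Real.sqrt_div hB.le]
  have hsΔ : √Δ * √Δ = Δ := Real.mul_self_sqrt hΔ.le
  rw [h2, h3]
  simp only [abs_mul, abs_div, abs_neg, abs_one, abs_of_pos sA, abs_of_pos sB,
    abs_of_pos sx, abs_of_pos hΔ, abs_of_pos sΔ, one_div]
  field_simp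
  ring_nf
  have sP : (0:ℝ) < √P := Real.sqrt_pos.mpr hP
  have sQ : (0:ℝ) < √Q := Real.sqrt_pos.mpr hQ
  rw [abs_of_pos (show (0:ℝ) < √(P * Q) * (√(P * Q - N ^ 2))⁻¹ from
      mul_pos sA (inv_pos.mpr sB)),
    abs_of_pos (show (0:ℝ) < (√(1 - xt ^ 2))⁻¹ from inv_pos.mpr sx),
    Real.sq_sqrt hΔ.le]
  field_simp


set_option maxHeartbeats 1000000 in
/-- **Derivative of an edge length with respect to the opposite dihedral angle,
spherical case.** For a `C¹` family of nondegenerate spherical tetrahedra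
(vertices `1,2,3,4` indexed here by `0,1,2,3`) in which the five edge lengths other
than `l₁₄` are constant, one has
`|θ₂₃′(t)| · √(G(t)) = sin(l₁₄(t)) · sin(l₂₃) · |l₁₄′(t)|`. -/
theorem spherical_opposite_edge_angle_derivative (α β : ℝ) (u : Fin 4 → ℝ → E4)
    (hC1 : ∀ a, ContDiffOn ℝ 1 (u a) (Set.Ioo α β))
    (hunit : ∀ t ∈ Set.Ioo α β, ∀ a, ‖u a t‖ = 1)
    (hli : ∀ t ∈ Set.Ioo α β, LinearIndependent ℝ fun a => u a t)
    (l12 l13 l23 l24 l34 : ℝ)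
    (h12 : ∀ t ∈ Set.Ioo α β, Real.arccos ⟪u 0 t, u 1 t⟫ = l12)
    (h13 : ∀ t ∈ Set.Ioo α β, Real.arccos ⟪u 0 t, u 2 t⟫ = l13)
    (h23 : ∀ t ∈ Set.Ioo α β, Real.arccos ⟪u 1 t, u 2 t⟫ = l23)
    (h24 : ∀ t ∈ Set.Ioo α β, Real.arccos ⟪u 1 t, u 3 t⟫ = l24)
    (h34 : ∀ t ∈ Set.Ioo α β, Real.arccos ⟪u 2 t, u 3 t⟫ = l34) :
    ∀ t ∈ Set.Ioo α β,
      |deriv (fun s => dihedralAngle (fun a => u a s) 1 2 0 3) t| *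
        Real.sqrt (Matrix.det (Matrix.of fun a b : Fin 4 =>
          Real.cos (Real.arccos ⟪u a t, u b t⟫))) =
      Real.sin (Real.arccos ⟪u 0 t, u 3 t⟫) * Real.sin l23 *
        |deriv (fun s => Real.arccos ⟪u 0 s, u 3 s⟫) t| := by
  intro t ht
  have hO : IsOpen (Set.Ioo α β) := isOpen_Ioo
  have hmem : Set.Ioo α β ∈ 𝓝 t := hO.mem_nhds ht
  -- inner products are bounded by 1
  have hb : ∀ s ∈ Set.Ioo α β, ∀ a b : Fin 4, -1 ≤ ⟪u a s, u b s⟫ ∧ ⟪u a s, u b s⟫ ≤ 1 := by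
    intro s hs a b
    have h := abs_real_inner_le_norm (u a s) (u b s)
    rw [hunit s hs a, hunit s hs b, mul_one] at h
    exact abs_le.mp h
  -- the five constrained inner products are constant on the interval
  have hconst : ∀ (a b : Fin 4) (l : ℝ),
      (∀ s ∈ Set.Ioo α β, Real.arccos ⟪u a s, u b s⟫ = l) →
      ∀ s ∈ Set.Ioo α β, ⟪u a s, u b s⟫ = ⟪u a t, u b t⟫ := by
    intro a b l hl s hs
    have e1 : Real.cos l = ⟪u a s, u b s⟫ := by
      rw [← hl s hs]; exact Real.cos_arccos (hb s hs a b).1 (hb s hs a b).2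
    have e2 : Real.cos l = ⟪u a t, u b t⟫ := by
      rw [← hl t ht]; exact Real.cos_arccos (hb t ht a b).1 (hb t ht a b).2
    rw [← e1, ← e2]
  have k01 := hconst 0 1 l12 h12
  have k02 := hconst 0 2 l13 h13
  have k12 := hconst 1 2 l23 h23
  have k13 := hconst 1 3 l24 h24
  have k23 := hconst 2 3 l34 h34
  obtain ⟨hΔpos, hPpos, hQpos, hNlt, hang_t, hdet_t⟩ :=
    snapshot (fun a => u a t) (hunit t ht) (hli t ht)
  set x : ℝ → ℝ := fun s => ⟪u 0 s, u 3 s⟫ with hxdef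
  set Δ0 := DD (fun a => u a t) with hΔ0def
  set P0 := PP (fun a => u a t) with hP0def
  set Q0 := QQ (fun a => u a t) with hQ0def
  set N0 := NN (fun a => u a t) with hN0def
  set cN := N0 - Δ0 * x t with hcNdef
  have hPPs : ∀ s ∈ Set.Ioo α β, PP (fun a => u a s) = P0 := by
    intro s hs
    rw [hP0def]
    simp only [PP, DD]
    rw [k01 s hs, k02 s hs, k12 s hs]
  have hQQs : ∀ s ∈ Set.Ioo α β, QQ (fun a => u a s) = Q0 := by
    intro s hs
    rw [hQ0def]
    simp only [QQ, DD]
    rw [k12 s hs, k13 s hs, k23 s hs]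
  have hNNs : ∀ s ∈ Set.Ioo α β, NN (fun a => u a s) = Δ0 * x s + cN := by
    intro s hs
    rw [hcNdef, hN0def, hΔ0def]
    simp only [NN, DD, hxdef]
    rw [k01 s hs, k02 s hs, k12 s hs, k13 s hs, k23 s hs]
    ring
  -- the dihedral angle function agrees with an explicit formula near t
  have hEq : (fun s => dihedralAngle (fun a => u a s) 1 2 0 3) =ᶠ[𝓝 t]
      (fun s => Real.arccos ((Δ0 * x s + cN) / Real.sqrt (P0 * Q0))) := by
    filter_upwards [hmem] with s hs
    obtain ⟨_, _, _, _, hang_s, _⟩ := snapshot (fun a => u a s) (hunit s hs) (hli s hs)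
    rw [hang_s, hNNs s hs, hPPs s hs, hQQs s hs]
  -- differentiability of x
  have hdiff0 : DifferentiableAt ℝ (u 0) t :=
    (((hC1 0).contDiffAt hmem).differentiableAt one_ne_zero)
  have hdiff3 : DifferentiableAt ℝ (u 3) t :=
    (((hC1 3).contDiffAt hmem).differentiableAt one_ne_zero)
  have hdx : HasDerivAt x (deriv x t) t :=
    (DifferentiableAt.inner ℝ hdiff0 hdiff3).hasDerivAt
  set x' := deriv x t with hx'def
  -- y0 bounds
  have hPQpos : 0 < P0 * Q0 := mul_pos hPpos hQpos
  have hRpos : 0 < Real.sqrt (P0 * Q0) := Real.sqrt_pos.mpr hPQpos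
  have hNx : Δ0 * x t + cN = N0 := by rw [hcNdef]; ring
  have hy2 : (N0 / Real.sqrt (P0 * Q0)) ^ 2 < 1 := by
    rw [div_pow, Real.sq_sqrt hPQpos.le]
    exact (div_lt_one hPQpos).mpr hNlt
  have hyne1 : (Δ0 * x t + cN) / Real.sqrt (P0 * Q0) ≠ -1 := by
    rw [hNx]; intro h; rw [h] at hy2; norm_num at hy2
  have hyne2 : (Δ0 * x t + cN) / Real.sqrt (P0 * Q0) ≠ 1 := by
    rw [hNx]; intro h; rw [h] at hy2; norm_num at hy2
  -- derivative of the dihedral angle function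
  have hinner : HasDerivAt (fun s => (Δ0 * x s + cN) / Real.sqrt (P0 * Q0))
      (Δ0 * x' / Real.sqrt (P0 * Q0)) t :=
    ((hdx.const_mul Δ0).add_const cN).div_const _
  have hθ : HasDerivAt (fun s => Real.arccos ((Δ0 * x s + cN) / Real.sqrt (P0 * Q0)))
      (-(1 / Real.sqrt (1 - ((Δ0 * x t + cN) / Real.sqrt (P0 * Q0)) ^ 2)) *
        (Δ0 * x' / Real.sqrt (P0 * Q0))) t :=
    (Real.hasDerivAt_arccos hyne1 hyne2).comp (h₂ := Real.arccos) t hinner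
  have hderivθ : deriv (fun s => dihedralAngle (fun a => u a s) 1 2 0 3) t =
      -(1 / Real.sqrt (1 - (N0 / Real.sqrt (P0 * Q0)) ^ 2)) *
        (Δ0 * x' / Real.sqrt (P0 * Q0)) := by
    rw [hEq.deriv_eq, ← hNx]
    exact hθ.deriv
  -- the edge length (0,3) derivative
  have hne03 : u 0 t ≠ u 3 t := by
    intro h
    have h0 := li_comb (hli t ht) ![1, 0, 0, -1] (by
      show (1:ℝ) • u 0 t + (0:ℝ) • u 1 t + (0:ℝ) • u 2 t + (-1:ℝ) • u 3 t = 0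
      linear_combination (norm := module) h) 0
    norm_num at h0
  have hne03' : u 0 t ≠ -u 3 t := by
    intro h
    have h0 := li_comb (hli t ht) ![1, 0, 0, 1] (by
      show (1:ℝ) • u 0 t + (0:ℝ) • u 1 t + (0:ℝ) • u 2 t + (1:ℝ) • u 3 t = 0
      linear_combination (norm := module) h) 0
    norm_num at h0
  have hxt2 : x t ^ 2 < 1 := inner_sq_lt_one (hunit t ht 0) (hunit t ht 3) hne03 hne03'
  have hxne1 : x t ≠ -1 := by intro h; rw [h] at hxt2; norm_num at hxt2
  have hxne2 : x t ≠ 1 := by intro h; rw [h] at hxt2; norm_num at hxt2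
  have hax : HasDerivAt (fun s => Real.arccos (x s))
      (-(1 / Real.sqrt (1 - x t ^ 2)) * x') t :=
    (Real.hasDerivAt_arccos hxne1 hxne2).comp t hdx
  have hderivR : deriv (fun s => Real.arccos ⟪u 0 s, u 3 s⟫) t =
      -(1 / Real.sqrt (1 - x t ^ 2)) * x' := hax.deriv
  -- the Gram matrix
  have hMat : (Matrix.of fun a b : Fin 4 => Real.cos (Real.arccos ⟪u a t, u b t⟫)) =
      Matrix.of (fun a b : Fin 4 => ⟪u a t, u b t⟫) := by
    ext a b
    simp only [Matrix.of_apply]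
    exact Real.cos_arccos (hb t ht a b).1 (hb t ht a b).2
  have hsin23 : Real.sin l23 = Real.sqrt Δ0 := by
    rw [← h23 t ht, Real.sin_arccos, hΔ0def]
    simp only [DD]
  have hsinx : Real.sin (Real.arccos ⟪u 0 t, u 3 t⟫) = Real.sqrt (1 - x t ^ 2) := by
    rw [Real.sin_arccos]
  rw [hMat, hderivθ, hderivR, hsinx, hsin23]
  exact final_alg Δ0 P0 Q0 N0 (x t) x'
    (Matrix.det (Matrix.of fun a b : Fin 4 => ⟪u a t, u b t⟫))
    hΔpos hPpos hQpos hNlt hdet_t hxt2
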